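/- arXiv:1005.4425 — 5 statements merged into one kernel-verified Lean document; each statement's English description precedes it below -/
import Mathlib

section
/- The function t ↦ log I₀(t) is differentiable on [0, ∞) with |d/dt log I₀(t)| ≤ 1 for all t ≥ 0, and there is an absolute constant B such that |log I₀(t)| ≤ B·t² for 0 ≤ t < 1 and |log I₀(t) − t| ≤ B·log(t+1) for t ≥ 1. -/
open Complex MeasureTheory Filter Set

/-- The modified Bessel function of order `0`. -/
noncomputable def besselI0 (t : ℝ) : ℝ := ∑' n : ℕ, (t / 2) ^ (2 * n) / (n.factorial : ℝ) ^ 2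

/-- The constant `C₁`. -/
noncomputable def Cone : ℝ :=
    (∫ t in Set.Ioc (0 : ℝ) 1, Real.log (besselI0 t) / t ^ 2) +
      ∫ t in Set.Ioi (1 : ℝ), (Real.log (besselI0 t) - t) / t ^ 2

/-- `∑_{p ≤ x} arctan (1/√(p²-1))`. -/
noncomputable def primeArctanSum (x : ℝ) : ℝ :=
    ∑ p ∈ (Finset.range (⌊x⌋₊ + 1)).filter Nat.Prime,
      Real.arctan (1 / Real.sqrt ((p : ℝ) ^ 2 - 1))

/-- The constant `C₂`. -/
noncomputable def Ctwo : ℝ :=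
    limUnder atTop fun x : ℝ => primeArctanSum x - Real.log (Real.log x)

/-- The series `∑_p ∑_{n ≥ 1} χ(p)^n / (n p^{n s})` defining `log L(s,χ)` for `Re s > 1`. -/
noncomputable def logLSeries {q : ℕ} (χ : DirichletCharacter ℂ q) (s : ℂ) : ℂ :=
    ∑' (p : Nat.Primes) (n : ℕ),
      χ ((p : ℕ) : ZMod q) ^ (n + 1) / ((n + 1) * ((p : ℕ) : ℂ) ^ ((n + 1 : ℕ) * s))

/-- `w` is the value of `log L(1,χ)` obtained by continuous variation of the series
`log L(σ,χ)` along the real segment `σ ∈ [1,∞)`. -/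
def IsLogL1 {q : ℕ} (χ : DirichletCharacter ℂ q) (w : ℂ) : Prop :=
    ∃ g : ℝ → ℂ, ContinuousOn g (Set.Ici 1) ∧
      (∀ σ : ℝ, 1 < σ → g σ = logLSeries χ (σ : ℂ)) ∧ g 1 = w

/-- `log L(1,χ)`, defined by continuous variation along the real axis. -/
noncomputable def logL1 {q : ℕ} (χ : DirichletCharacter ℂ q) : ℂ :=
    Classical.epsilon (IsLogL1 χ)

/-- `arg L(1,χ)`. -/
noncomputable def argL1 {q : ℕ} (χ : DirichletCharacter ℂ q) : ℝ := (logL1 χ).im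

/-- The distribution function `Ψ_q(τ)`. -/
noncomputable def Psi (q : ℕ) (τ : ℝ) : ℝ :=
    (Nat.card {χ : DirichletCharacter ℂ q // χ ≠ 1 ∧ τ < argL1 χ} : ℝ) / q.totient

/-- `χ` is exceptional (relative to the constant `c`). -/
def IsExceptional (c : ℝ) {q : ℕ} [NeZero q] (χ : DirichletCharacter ℂ q) : Prop :=
    ∃ s : ℂ, 1 - c / Real.log (q * (|s.im| + 2)) ≤ s.re ∧
      DirichletCharacter.LFunction χ s = 0

/-- The `z`-th divisor function `d_z(n)`. -/
noncomputable def dC (z : ℂ) (n : ℕ) : ℂ :=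
    if n = 0 then 0 else
      ∏ p ∈ n.primeFactors,
        (∏ i ∈ Finset.range (n.factorization p), (z + i)) / ((n.factorization p).factorial : ℂ)

/-- Iterated logarithms. -/
noncomputable def log₂ (x : ℝ) : ℝ := Real.log (Real.log x)
noncomputable def log₃ (x : ℝ) : ℝ := Real.log (log₂ x)
noncomputable def log₄ (x : ℝ) : ℝ := Real.log (log₃ x)

/-- The radius `R(q)`. -/
noncomputable def Rq (q : ℕ) : ℝ := Real.log q * log₄ q / (10 * log₂ q * log₃ q)



/-- The conjugate character `χ̄`. -/
noncomputable def conjChar {q : ℕ} (χ : DirichletCharacter ℂ q) : DirichletCharacter ℂ q :=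
    χ.ringHomComp (starRingEnd ℂ)

/-- `L(1,χ)^z := exp(z · log L(1,χ))`. -/
noncomputable def L1pow {q : ℕ} (χ : DirichletCharacter ℂ q) (z : ℂ) : ℂ :=
    Complex.exp (z * logL1 χ)

/-- The moments `M_q(z₁,z₂)`, relative to the constant `c` defining exceptional characters. -/
noncomputable def moment (c : ℝ) (q : ℕ) [NeZero q] (z₁ z₂ : ℂ) : ℂ :=
    (q.totient : ℂ)⁻¹ *
      ∑ᶠ χ ∈ {χ : DirichletCharacter ℂ q | χ ≠ 1 ∧ ¬ IsExceptional c χ},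
        L1pow χ z₁ * L1pow (conjChar χ) z₂

/-- The `j`-fold divisor function (number of ordered factorizations into `j` parts). -/
def dNat (j : ℕ) (n : ℕ) : ℕ :=
    if n = 0 then 0 else
      ∏ p ∈ n.primeFactors, Nat.choose (j + n.factorization p - 1) (n.factorization p)

/-- The divisor function `d_k(n)` for real `k`. -/
noncomputable def dR (k : ℝ) (n : ℕ) : ℝ :=
    if n = 0 then 0 else
      ∏ p ∈ n.primeFactors,
        (∏ i ∈ Finset.range (n.factorization p), (k + i)) / ((n.factorization p).factorial : ℝ)

/-- The distribution function `Φ_q(τ)`. -/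
noncomputable def Phi (q : ℕ) (τ : ℝ) : ℝ :=
    (Nat.card {χ : DirichletCharacter ℂ q // χ ≠ 1 ∧ argL1 χ < -τ} : ℝ) / q.totient


namespace BesselAux

noncomputable def bA (t : ℝ) (n : ℕ) : ℝ := (t / 2) ^ (2 * n) / (n.factorial : ℝ) ^ 2

noncomputable def bB (t : ℝ) (n : ℕ) : ℝ := n * (t / 2) ^ (2 * n - 1) / (n.factorial : ℝ) ^ 2

lemma fact_pos (n : ℕ) : (0:ℝ) < (n.factorial : ℝ) := by exact_mod_cast n.factorial_pos
lemma fact_ne (n : ℕ) : ((n.factorial : ℝ)) ≠ 0 := (fact_pos n).ne'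
lemma one_le_fact (n : ℕ) : (1:ℝ) ≤ (n.factorial : ℝ) := by
  exact_mod_cast n.factorial_pos

lemma bA_nonneg (t : ℝ) (n : ℕ) : 0 ≤ bA t n := by
  unfold bA; rw [pow_mul]; positivity

lemma summable_bA (t : ℝ) : Summable (bA t) := by
  refine Summable.of_nonneg_of_le (bA_nonneg t) (fun n => ?_)
    (Real.summable_pow_div_factorial ((t/2)^2))
  unfold bA
  rw [pow_mul]
  have h : (n.factorial:ℝ) ≤ ((n.factorial:ℝ))^2 := by nlinarith [one_le_fact n, fact_pos n]
  gcongr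

lemma summable_mul_pow (x : ℝ) (hx : 0 ≤ x) :
    Summable (fun n : ℕ => (n:ℝ) * x ^ n / (n.factorial:ℝ)^2) := by
  refine Summable.of_nonneg_of_le (fun n => by positivity) (fun n => ?_)
    (Real.summable_pow_div_factorial x)
  have h1 : (n:ℝ) ≤ (n.factorial : ℝ) := by exact_mod_cast n.self_le_factorial
  calc (n:ℝ) * x ^ n / (n.factorial:ℝ)^2
      = ((n:ℝ)/(n.factorial:ℝ)) * (x^n/(n.factorial:ℝ)) := by ring
    _ ≤ 1 * (x^n/(n.factorial:ℝ)) := by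
        apply mul_le_mul_of_nonneg_right
        · exact (div_le_one (fact_pos n)).mpr h1
        · positivity
    _ = x^n/(n.factorial:ℝ) := one_mul _

lemma bB_abs_le (t : ℝ) {R : ℝ} (hR : 1 ≤ R) (hy : |t| ≤ R) (n : ℕ) :
    |bB t n| ≤ (n:ℝ) * (R^2)^n / (n.factorial:ℝ)^2 := by
  have hR0 : (0:ℝ) ≤ R := le_trans zero_le_one hR
  have h2 : |t/2| ≤ R := by
    rw [_root_.abs_div]
    calc |t| / |(2:ℝ)| ≤ |t| := by rw [_root_.abs_two]; linarith [abs_nonneg t]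
      _ ≤ R := hy
  unfold bB
  rw [_root_.abs_div, _root_.abs_mul, _root_.abs_pow, Nat.abs_cast,
    _root_.abs_of_nonneg (by positivity : (0:ℝ) ≤ ((n.factorial:ℝ))^2)]
  have h3 : |t/2| ^ (2*n-1) ≤ (R^2)^n :=
    calc |t/2| ^ (2*n-1) ≤ R ^ (2*n-1) := pow_le_pow_left₀ (abs_nonneg _) h2 _
      _ ≤ R ^ (2*n) := pow_le_pow_right₀ hR (Nat.sub_le _ _)
      _ = (R^2)^n := pow_mul R 2 n
  gcongr

lemma summable_bB (t : ℝ) : Summable (bB t) := by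
  apply Summable.of_norm
  refine Summable.of_nonneg_of_le (fun n => norm_nonneg _) (fun n => ?_)
    (summable_mul_pow ((|t|+1)^2) (by positivity))
  rw [Real.norm_eq_abs]
  exact bB_abs_le t (by linarith [abs_nonneg t]) (by linarith) n

lemma hasDerivAt_bA (n : ℕ) (t : ℝ) : HasDerivAt (fun u => bA u n) (bB t n) t := by
  have h0 : HasDerivAt (fun u : ℝ => u/2) (1/2) t := (hasDerivAt_id t).div_const 2
  have h : HasDerivAt (fun u : ℝ => (u/2)^(2*n))
      ((2*n : ℕ) * (t/2)^(2*n-1) * (1/2)) t := h0.pow (2*n)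
  have h' := h.div_const ((n.factorial:ℝ)^2)
  refine h'.congr_deriv ?_
  unfold bB
  push_cast
  ring

noncomputable def bI1 (t : ℝ) : ℝ := ∑' n, bB t n

lemma besselI0_eq (t : ℝ) : besselI0 t = ∑' n, bA t n := rfl

lemma hasDerivAt_besselI0 (t : ℝ) : HasDerivAt besselI0 (bI1 t) t := by
  set R : ℝ := |t| + 1 with hRdef
  have habs : (0:ℝ) ≤ |t| := abs_nonneg t
  have hR1 : 1 ≤ R := by rw [hRdef]; linarith
  have hmem : t ∈ Set.Ioo (-R) R := by
    constructor
    · have := neg_abs_le t; rw [hRdef]; linarith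
    · have := le_abs_self t; rw [hRdef]; linarith
  have key := hasDerivAt_tsum_of_isPreconnected
    (u := fun n : ℕ => (n:ℝ) * (R^2)^n / (n.factorial:ℝ)^2)
    (summable_mul_pow (R^2) (by positivity))
    (isOpen_Ioo (a := -R) (b := R)) isPreconnected_Ioo
    (fun n y _ => hasDerivAt_bA n y)
    (fun n y hy => by
      rw [Real.norm_eq_abs]
      exact bB_abs_le y hR1 (le_of_lt (abs_lt.mpr ⟨hy.1, hy.2⟩)) n)
    hmem (summable_bA t) hmem
  exact key

lemma one_le_besselI0 (t : ℝ) : 1 ≤ besselI0 t := by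
  have h := Summable.le_tsum (summable_bA t) 0 (fun n _ => bA_nonneg t n)
  have h0 : bA t 0 = 1 := by norm_num [bA]
  rw [besselI0_eq]
  linarith [h, h0.symm.le]

lemma besselI0_pos (t : ℝ) : 0 < besselI0 t := lt_of_lt_of_le one_pos (one_le_besselI0 t)

lemma summable_bA_shift (t : ℝ) : Summable (fun n => bA t (n+1)) :=
  (summable_nat_add_iff 1).mpr (summable_bA t)

lemma tsum_bA_shift (t : ℝ) : ∑' n, bA t (n+1) = besselI0 t - 1 := by
  have h := Summable.tsum_eq_zero_add (summable_bA t)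
  have h0 : bA t 0 = 1 := by norm_num [bA]
  rw [besselI0_eq]
  rw [h, h0]
  ring

lemma bB_succ_le (t : ℝ) (n : ℕ) : bB t (n+1) ≤ (bA t n + bA t (n+1))/2 := by
  have e1 : bB t (n+1) = ((t/2)^n/(n.factorial:ℝ)) * ((t/2)^(n+1)/((n+1).factorial:ℝ)) := by
    unfold bB
    have h2 : 2*(n+1)-1 = n + (n+1) := by omega
    rw [h2, pow_add, Nat.factorial_succ]
    push_cast
    field_simp
  have e2 : bA t n = ((t/2)^n/(n.factorial:ℝ))^2 := by
    unfold bA; rw [mul_comm 2 n, pow_mul]; ring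
  have e3 : bA t (n+1) = ((t/2)^(n+1)/((n+1).factorial:ℝ))^2 := by
    unfold bA; rw [mul_comm 2 (n+1), pow_mul]; ring
  have := two_mul_le_add_sq ((t/2)^n/(n.factorial:ℝ)) ((t/2)^(n+1)/((n+1).factorial:ℝ))
  rw [e1, e2, e3]
  linarith

lemma bI1_le (t : ℝ) : bI1 t ≤ besselI0 t := by
  have hA := summable_bA t
  have hB := summable_bB t
  have hBs : Summable (fun n => bB t (n+1)) := (summable_nat_add_iff 1).mpr hB
  have hAs := summable_bA_shift t
  have key : ∑' n, bB t (n+1) ≤ ∑' n, (bA t n + bA t (n+1))/2 := by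
    refine Summable.tsum_le_tsum (fun n => bB_succ_le t n) hBs ?_
    exact (hA.add hAs).div_const 2
  have hsum : ∑' n, (bA t n + bA t (n+1))/2 = (besselI0 t + (besselI0 t - 1))/2 := by
    rw [tsum_div_const, Summable.tsum_add hA hAs, tsum_bA_shift, ← besselI0_eq]
  have hzero : bB t 0 = 0 := by norm_num [bB]
  have h := Summable.tsum_eq_zero_add hB
  have h1 : bI1 t = ∑' n, bB t (n+1) := by rw [bI1, h, hzero, zero_add]
  rw [h1]
  calc ∑' n, bB t (n+1) ≤ (besselI0 t + (besselI0 t - 1))/2 := by rw [← hsum]; exact key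
    _ ≤ besselI0 t := by linarith [one_le_besselI0 t]

lemma bI1_nonneg (t : ℝ) (ht : 0 ≤ t) : 0 ≤ bI1 t := by
  apply tsum_nonneg
  intro n
  unfold bB
  have : (0:ℝ) ≤ t/2 := by linarith
  positivity

end BesselAux

namespace BesselAux

lemma exp_eq (t : ℝ) : Real.exp t = ∑' n : ℕ, t^n/(n.factorial:ℝ) := by
  rw [Real.exp_eq_exp_ℝ, NormedSpace.exp_eq_tsum_div]

lemma bA_def (t : ℝ) (n : ℕ) : bA t n = (t / 2) ^ (2 * n) / (n.factorial : ℝ) ^ 2 := rfl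

lemma fact_le_pow_mul_sq (n : ℕ) :
    ((2*n).factorial : ℝ) ≤ 2^(2*n) * ((n.factorial:ℝ))^2 := by
  have h1 : (2*n).factorial = (2*n).choose n * (n.factorial * n.factorial) := by
    have := Nat.choose_mul_factorial_mul_factorial (show n ≤ 2*n by omega)
    rw [show 2*n - n = n by omega] at this
    rw [← this]; ring
  have h2 : (2*n).choose n ≤ 4^n := by
    calc (2*n).choose n ≤ (2*n+1).choose n := Nat.choose_le_choose n (by omega)
      _ ≤ 4^n := Nat.choose_middle_le_pow n
  have h3 : (2*n).factorial ≤ 4^n * (n.factorial * n.factorial) := by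
    rw [h1]; exact Nat.mul_le_mul_right _ h2
  have h4 : ((2:ℝ))^(2*n) = 4^n := by
    rw [pow_mul]; norm_num
  rw [h4]
  calc ((2*n).factorial : ℝ) ≤ ((4^n * (n.factorial * n.factorial) : ℕ) : ℝ) := by
        exact_mod_cast h3
    _ = 4^n * ((n.factorial:ℝ))^2 := by push_cast; ring

lemma besselI0_le_exp (t : ℝ) (ht : 0 ≤ t) : besselI0 t ≤ Real.exp t := by
  rw [exp_eq, besselI0_eq]
  refine Summable.tsum_le_tsum_of_inj (fun n => 2*n) (fun a b h => by dsimp at h; omega)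
    (fun c _ => div_nonneg (pow_nonneg ht _) (fact_pos c).le)
    (fun n => ?_) (summable_bA t) (Real.summable_pow_div_factorial t)
  rw [bA_def]
  have he : (t/2)^(2*n) = t^(2*n)/2^(2*n) := div_pow t 2 (2*n)
  rw [he, div_div]
  have hc := fact_le_pow_mul_sq n
  have hnum : (0:ℝ) ≤ t^(2*n) := pow_nonneg ht _
  have hpos : (0:ℝ) < ((2*n).factorial : ℝ) := fact_pos _
  gcongr

lemma centralBinom_real (n : ℕ) :
    (Nat.centralBinom n : ℝ) * ((n.factorial:ℝ))^2 = ((2*n).factorial : ℝ) := by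
  have h := Nat.choose_mul_factorial_mul_factorial (show n ≤ 2*n by omega)
  rw [show 2*n - n = n by omega] at h
  have h2 : ((2*n).choose n : ℝ) * ((n.factorial:ℝ) * (n.factorial:ℝ)) = ((2*n).factorial:ℝ) := by
    exact_mod_cast congrArg (fun k : ℕ => (k : ℝ)) (by rw [← h]; ring : (2*n).choose n * (n.factorial * n.factorial) = (2*n).factorial)
  rw [Nat.centralBinom]
  nlinarith [h2]

lemma even_term_le (t : ℝ) (ht : 0 ≤ t) (n : ℕ) :
    t^(2*n)/((2*n).factorial:ℝ) ≤ (2*(n:ℝ)+1) * bA t n := by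
  have hb : (4:ℕ)^n ≤ (2*n+1) * Nat.centralBinom n := by
    rcases Nat.eq_zero_or_pos n with h | h
    · subst h; simp [Nat.centralBinom]
    · calc 4^n ≤ 2*n * Nat.centralBinom n :=
          Nat.four_pow_le_two_mul_self_mul_centralBinom n h
        _ ≤ (2*n+1) * Nat.centralBinom n := Nat.mul_le_mul_right _ (by omega)
  have hbR : ((4:ℝ))^n ≤ (2*(n:ℝ)+1) * (Nat.centralBinom n : ℝ) := by
    exact_mod_cast hb
  have hcb := centralBinom_real n
  have hnum : (0:ℝ) ≤ t^(2*n) := pow_nonneg ht _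
  have hf : (0:ℝ) < ((n.factorial:ℝ))^2 := by positivity
  rw [bA_def]
  have h24 : (2:ℝ)^(2*n) = 4^n := by rw [pow_mul]; norm_num
  have he : (t/2)^(2*n) = t^(2*n)/(4:ℝ)^n := by rw [div_pow, h24]
  rw [he]
  have e2 : (2*(n:ℝ)+1) * (t^(2*n)/(4:ℝ)^n / (n.factorial:ℝ)^2)
      = ((2*(n:ℝ)+1) * t^(2*n)) / ((4:ℝ)^n * (n.factorial:ℝ)^2) := by ring
  rw [e2, div_le_div_iff₀ (fact_pos (2*n)) (by positivity)]
  have h5 : t^(2*n) * ((4:ℝ)^n) ≤ t^(2*n) * ((2*(n:ℝ)+1) * (Nat.centralBinom n : ℝ)) :=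
    mul_le_mul_of_nonneg_left hbR hnum
  have h6 := mul_le_mul_of_nonneg_right h5 hf.le
  calc t^(2*n) * ((4:ℝ)^n * (n.factorial:ℝ)^2)
      = (t^(2*n) * (4:ℝ)^n) * (n.factorial:ℝ)^2 := by ring
    _ ≤ (t^(2*n) * ((2*(n:ℝ)+1) * (Nat.centralBinom n : ℝ))) * (n.factorial:ℝ)^2 := h6
    _ = (2*(n:ℝ)+1) * t^(2*n) * ((Nat.centralBinom n : ℝ) * (n.factorial:ℝ)^2) := by ring
    _ = (2*(n:ℝ)+1) * t^(2*n) * ((2*n).factorial:ℝ) := by rw [hcb]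

end BesselAux

namespace BesselAux

lemma summable_n_bA (t : ℝ) : Summable (fun n : ℕ => (n:ℝ) * bA t n) := by
  have h := summable_mul_pow ((t/2)^2) (by positivity)
  refine h.congr fun n => ?_
  rw [bA_def, pow_mul, mul_div_assoc]

lemma tsum_n_bA_le (t : ℝ) (ht : 0 ≤ t) :
    ∑' n : ℕ, (n:ℝ) * bA t n ≤ t^2/4 * besselI0 t := by
  have hnA := summable_n_bA t
  have hshift : Summable (fun n : ℕ => ((n:ℝ)+1) * bA t (n+1)) := by
    have h := (summable_nat_add_iff (f := fun n : ℕ => (n:ℝ) * bA t n) 1).mpr hnA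
    refine h.congr fun n => ?_
    push_cast
    ring
  have h0 : ∑' n : ℕ, (n:ℝ) * bA t n = ∑' n : ℕ, ((n:ℝ)+1) * bA t (n+1) := by
    rw [Summable.tsum_eq_zero_add hnA]
    simp only [Nat.cast_zero, zero_mul, zero_add]
    exact tsum_congr fun n => by push_cast; ring
  rw [h0]
  have hterm : ∀ n : ℕ, ((n:ℝ)+1) * bA t (n+1) ≤ t^2/4 * bA t n := by
    intro n
    have hp : (0:ℝ) ≤ (t/2)^(2*n) := by rw [pow_mul]; positivity
    have e : ((n:ℝ)+1) * bA t (n+1)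
        = t^2/4 * ((t/2)^(2*n) / ((n.factorial:ℝ) * ((n+1).factorial:ℝ))) := by
      rw [bA_def, Nat.factorial_succ]
      push_cast
      rw [show 2*(n+1) = 2 + 2*n by omega, pow_add]
      field_simp
      ring
    rw [e, bA_def]
    have hd1 : (0:ℝ) < ((n.factorial:ℝ))^2 := by positivity
    have hd2 : ((n.factorial:ℝ))^2 ≤ (n.factorial:ℝ) * ((n+1).factorial:ℝ) := by
      have hff : (n.factorial:ℝ) ≤ ((n+1).factorial:ℝ) := by
        exact_mod_cast Nat.factorial_le (by omega)
      nlinarith [fact_pos n]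
    have hq : (t/2)^(2*n) / ((n.factorial:ℝ) * ((n+1).factorial:ℝ))
        ≤ (t/2)^(2*n) / ((n.factorial:ℝ))^2 := by gcongr
    exact mul_le_mul_of_nonneg_left hq (by positivity)
  calc ∑' n : ℕ, ((n:ℝ)+1) * bA t (n+1) ≤ ∑' n : ℕ, t^2/4 * bA t n :=
      Summable.tsum_le_tsum hterm hshift ((summable_bA t).mul_left _)
    _ = t^2/4 * besselI0 t := by rw [tsum_mul_left, ← besselI0_eq]

lemma summable_two_n_add_one (t : ℝ) : Summable (fun n : ℕ => (2*(n:ℝ)+1) * bA t n) := by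
  have h := ((summable_n_bA t).mul_left 2).add (summable_bA t)
  refine h.congr fun n => ?_
  ring

lemma summable_even (t : ℝ) (ht : 0 ≤ t) :
    Summable (fun n : ℕ => t^(2*n)/((2*n).factorial:ℝ)) :=
  Summable.of_nonneg_of_le (fun n => div_nonneg (pow_nonneg ht _) (fact_pos _).le)
    (even_term_le t ht) (summable_two_n_add_one t)

lemma tsum_even_le (t : ℝ) (ht : 0 ≤ t) :
    ∑' n : ℕ, t^(2*n)/((2*n).factorial:ℝ) ≤ (1 + t^2/2) * besselI0 t := by
  calc ∑' n : ℕ, t^(2*n)/((2*n).factorial:ℝ)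
      ≤ ∑' n : ℕ, (2*(n:ℝ)+1) * bA t n :=
        Summable.tsum_le_tsum (even_term_le t ht) (summable_even t ht) (summable_two_n_add_one t)
    _ = 2 * (∑' n : ℕ, (n:ℝ) * bA t n) + besselI0 t := by
        rw [tsum_congr (fun n : ℕ => by ring :
          ∀ n : ℕ, (2*(n:ℝ)+1) * bA t n = 2*((n:ℝ)*bA t n) + bA t n),
          Summable.tsum_add ((summable_n_bA t).mul_left 2) (summable_bA t), tsum_mul_left, ← besselI0_eq]
    _ ≤ 2 * (t^2/4 * besselI0 t) + besselI0 t := by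
        have := tsum_n_bA_le t ht; linarith
    _ = (1 + t^2/2) * besselI0 t := by ring

lemma odd_term_le (t : ℝ) (ht : 0 ≤ t) (n : ℕ) :
    t^(2*n+1)/((2*n+1).factorial:ℝ) ≤ t * (t^(2*n)/((2*n).factorial:ℝ)) := by
  have hnum : (0:ℝ) ≤ t^(2*n) := pow_nonneg ht _
  have hpos : (0:ℝ) < ((2*n).factorial:ℝ) := fact_pos _
  have hfl : ((2*n).factorial:ℝ) ≤ ((2*n+1).factorial:ℝ) := by
    exact_mod_cast Nat.factorial_le (by omega)
  have h1 : t^(2*n+1) = t * t^(2*n) := by rw [pow_succ]; ring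
  rw [h1, mul_div_assoc]
  refine mul_le_mul_of_nonneg_left ?_ ht
  gcongr

set_option maxHeartbeats 1000000 in
lemma exp_le_bessel (t : ℝ) (ht : 0 ≤ t) :
    Real.exp t ≤ (1+t) * ((1 + t^2/2) * besselI0 t) := by
  have hsE := summable_even t ht
  have hsO : Summable (fun n : ℕ => t^(2*n+1)/((2*n+1).factorial:ℝ)) :=
    Summable.of_nonneg_of_le (fun n => div_nonneg (pow_nonneg ht _) (fact_pos _).le)
      (odd_term_le t ht) (hsE.mul_left t)
  have hsplit : (∑' n : ℕ, t^(2*n)/((2*n).factorial:ℝ))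
      + (∑' n : ℕ, t^(2*n+1)/((2*n+1).factorial:ℝ)) = ∑' n : ℕ, t^n/(n.factorial:ℝ) :=
    tsum_even_add_odd (f := fun n : ℕ => t^n/(n.factorial:ℝ)) hsE hsO
  have hOE : ∑' n : ℕ, t^(2*n+1)/((2*n+1).factorial:ℝ)
      ≤ t * ∑' n : ℕ, t^(2*n)/((2*n).factorial:ℝ) := by
    rw [← tsum_mul_left]
    exact Summable.tsum_le_tsum (odd_term_le t ht) hsO (hsE.mul_left t)
  have hE := tsum_even_le t ht
  have hmul := mul_le_mul_of_nonneg_left hE ht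
  rw [exp_eq, ← hsplit]
  calc (∑' n : ℕ, t^(2*n)/((2*n).factorial:ℝ)) + (∑' n : ℕ, t^(2*n+1)/((2*n+1).factorial:ℝ))
      ≤ (1 + t^2/2) * besselI0 t + t * ((1 + t^2/2) * besselI0 t) := by linarith
    _ = (1+t) * ((1 + t^2/2) * besselI0 t) := by ring

lemma log_small (t : ℝ) (ht : 0 ≤ t) (ht1 : t < 1) : Real.log (besselI0 t) ≤ 3 * t^2 := by
  have h1 : Real.log (besselI0 t) ≤ besselI0 t - 1 :=
    Real.log_le_sub_one_of_pos (besselI0_pos t)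
  have h2 : besselI0 t - 1 = ∑' n, bA t (n+1) := (tsum_bA_shift t).symm
  have hterm : ∀ n : ℕ, bA t (n+1) ≤ t^2/4 * (1/4:ℝ)^n := by
    intro n
    rw [bA_def]
    have e1 : (t/2)^(2*(n+1)) = ((t/2)^2)^(n+1) := by rw [pow_mul]
    have hle : (t/2)^2 ≤ 1/4 := by nlinarith
    have h0 : (0:ℝ) ≤ (t/2)^2 := by positivity
    have hnum : (0:ℝ) ≤ (t/2)^(2*(n+1)) := by rw [e1]; positivity
    have hge1 : (1:ℝ) ≤ ((n+1).factorial:ℝ)^2 := by nlinarith [one_le_fact (n+1)]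
    calc (t/2)^(2*(n+1))/((n+1).factorial:ℝ)^2 ≤ (t/2)^(2*(n+1)) / 1 := by gcongr
      _ = ((t/2)^2) * ((t/2)^2)^n := by rw [div_one, e1, pow_succ]; ring
      _ ≤ (t^2/4) * (1/4:ℝ)^n := by
          have hpp := pow_le_pow_left₀ h0 hle n
          calc ((t/2)^2) * ((t/2)^2)^n ≤ ((t/2)^2) * (1/4:ℝ)^n :=
                mul_le_mul_of_nonneg_left hpp h0
            _ = (t^2/4) * (1/4:ℝ)^n := by ring_nf
  have hsum : ∑' n : ℕ, bA t (n+1) ≤ ∑' n : ℕ, t^2/4 * (1/4:ℝ)^n :=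
    Summable.tsum_le_tsum hterm (summable_bA_shift t)
      ((summable_geometric_of_lt_one (by norm_num) (by norm_num)).mul_left _)
  have hg : ∑' n : ℕ, t^2/4 * (1/4:ℝ)^n = t^2/4 * (4/3) := by
    rw [tsum_mul_left, tsum_geometric_of_lt_one (by norm_num) (by norm_num)]
    norm_num
  nlinarith [h1, hsum, sq_nonneg t]

end BesselAux


/-- **Lemma 3.1.** `log I₀(t)` is differentiable on `[0,∞)` with derivative bounded by `1`,
`log I₀(t) = O(t²)` for `0 ≤ t < 1`, and `log I₀(t) = t + O(log(t+1))` for `t ≥ 1`. -/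
theorem log_besselI0_estimates :
    ∃ B : ℝ,
      (∀ t : ℝ, 0 ≤ t → DifferentiableAt ℝ (fun u : ℝ => Real.log (besselI0 u)) t ∧
        |deriv (fun u : ℝ => Real.log (besselI0 u)) t| ≤ 1) ∧
      (∀ t : ℝ, 0 ≤ t → t < 1 → |Real.log (besselI0 t)| ≤ B * t ^ 2) ∧
      (∀ t : ℝ, 1 ≤ t → |Real.log (besselI0 t) - t| ≤ B * Real.log (t + 1)) := by
  refine ⟨3, fun t ht => ?_, fun t ht ht1 => ?_, fun t ht => ?_⟩
  · have hd := BesselAux.hasDerivAt_besselI0 t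
    have hpos := BesselAux.besselI0_pos t
    have hlog : HasDerivAt (fun u : ℝ => Real.log (besselI0 u))
        (BesselAux.bI1 t / besselI0 t) t := hd.log hpos.ne'
    refine ⟨hlog.differentiableAt, ?_⟩
    rw [hlog.deriv]
    have h0 : 0 ≤ BesselAux.bI1 t := BesselAux.bI1_nonneg t ht
    rw [_root_.abs_of_nonneg (div_nonneg h0 hpos.le)]
    exact (div_le_one hpos).mpr (BesselAux.bI1_le t)
  · have hlog0 : 0 ≤ Real.log (besselI0 t) :=
      Real.log_nonneg (BesselAux.one_le_besselI0 t)
    rw [_root_.abs_of_nonneg hlog0]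
    exact BesselAux.log_small t ht ht1
  · have ht0 : (0:ℝ) ≤ t := by linarith
    have hpos := BesselAux.besselI0_pos t
    have hup : Real.log (besselI0 t) ≤ t := by
      have h := Real.log_le_log hpos (BesselAux.besselI0_le_exp t ht0)
      rwa [Real.log_exp] at h
    have hlow : t - 3 * Real.log (t+1) ≤ Real.log (besselI0 t) := by
      have hexp := BesselAux.exp_le_bessel t ht0
      have hb : (1+t) * ((1 + t^2/2) * besselI0 t) ≤ (t+1)^3 * besselI0 t := by
        nlinarith [mul_nonneg (mul_nonneg (show (0:ℝ) ≤ 1+t by linarith) hpos.le)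
          (show (0:ℝ) ≤ 2*t + t^2/2 by nlinarith [sq_nonneg t])]
      have h2 : Real.exp t ≤ (t+1)^3 * besselI0 t := le_trans hexp hb
      have h3 : t ≤ Real.log ((t+1)^3 * besselI0 t) := by
        have h := Real.log_le_log (Real.exp_pos t) h2
        rwa [Real.log_exp] at h
      rw [Real.log_mul (by positivity) hpos.ne', Real.log_pow] at h3
      push_cast at h3
      linarith
    have hlogpos : 0 ≤ Real.log (t+1) := Real.log_nonneg (by linarith)
    rw [abs_le]
    constructor <;> [linarith; linarith]
end

section
/- For every prime p, all complex numbers z₁, z₂, and every real σ > 1/2, one has ∑_{a=0}^∞ d_{z₁}(p^a) d_{z₂}(p^a) / p^{2σa} = (1/2π) ∫_{−π}^{π} (1 − e^{iθ}/p^σ)^{−z₁} (1 − e^{−iθ}/p^σ)^{−z₂} dθ, where (1−w)^{−z} := exp(−z·Log(1−w)) with Log the principal branch of the logarithm (note |e^{±iθ}/p^σ| < 1). -/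
open Complex MeasureTheory Filter Set
open Finset

lemma one_sub_mem_slitPlane {w : ℂ} (hw : ‖w‖ < 1) : 1 - w ∈ Complex.slitPlane := by
  rw [sub_eq_add_neg]
  exact Complex.mem_slitPlane_of_norm_lt_one (by simpa using hw)

lemma one_sub_ne_zero {w : ℂ} (hw : ‖w‖ < 1) : 1 - w ≠ 0 :=
  Complex.slitPlane_ne_zero (one_sub_mem_slitPlane hw)

lemma hasDerivAt_G (z : ℂ) (n : ℕ) {w : ℂ} (hw : ‖w‖ < 1) :
    HasDerivAt (fun w => (∏ i ∈ range n, (z + i)) * Complex.exp (-(z + n) * Complex.log (1 - w)))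
      ((∏ i ∈ range (n + 1), (z + i)) * Complex.exp (-(z + (n + 1 : ℕ)) * Complex.log (1 - w))) w := by
  have h1 : HasDerivAt (fun w : ℂ => 1 - w) (-1) w := by
    simpa using (hasDerivAt_id w).const_sub 1
  have h2 : HasDerivAt (fun w : ℂ => Complex.log (1 - w)) (-(1 - w)⁻¹) w := by
    exact ((Complex.hasDerivAt_log (one_sub_mem_slitPlane hw)).comp w h1).congr_deriv (by ring)
  have h3 : HasDerivAt (fun w : ℂ => -(z + n) * Complex.log (1 - w))
      ((z + n) * (1 - w)⁻¹) w := by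
    have := h2.const_mul (-(z + n))
    exact this.congr_deriv (by ring)
  have h4 := (Complex.hasDerivAt_exp _).comp w h3
  have h5 := h4.const_mul (∏ i ∈ range n, (z + i))
  refine h5.congr_deriv ?_
  rw [prod_range_succ]
  have hL : Complex.exp (-(z + (n + 1 : ℕ)) * Complex.log (1 - w))
      = Complex.exp (-(z + n) * Complex.log (1 - w)) * (1 - w)⁻¹ := by
    rw [← Complex.exp_log (one_sub_ne_zero hw) , ← Complex.exp_neg, ← Complex.exp_add,
      Complex.exp_log (one_sub_ne_zero hw)]
    push_cast
    ring_nf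
  rw [hL]
  push_cast
  ring

lemma binomialSeries_hasSum (z : ℂ) {w : ℂ} (hw : ‖w‖ < 1) :
    HasSum (fun a : ℕ => (∏ i ∈ range a, (z + i)) / (a.factorial : ℂ) * w ^ a)
      (Complex.exp (-z * Complex.log (1 - w))) := by
  set f : ℂ → ℂ := fun w => Complex.exp (-z * Complex.log (1 - w)) with hf
  have hmem : ∀ v ∈ Metric.ball (0 : ℂ) 1, ‖v‖ < 1 := by
    intro v hv; simpa using Metric.mem_ball.mp hv
  have hdiff : DifferentiableOn ℂ f (Metric.ball 0 1) := by
    intro v hv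
    exact ((hasDerivAt_G z 0 (hmem v hv)).congr_of_eventuallyEq
      (by filter_upwards with x; simp [f])).differentiableAt.differentiableWithinAt
  have key : ∀ n : ℕ, Set.EqOn (iteratedDeriv n f)
      (fun w => (∏ i ∈ range n, (z + i)) * Complex.exp (-(z + n) * Complex.log (1 - w)))
      (Metric.ball 0 1) := by
    intro n
    induction n with
    | zero => intro v hv; simp [f]
    | succ n ih =>
        intro v hv
        rw [iteratedDeriv_succ]
        have hev : iteratedDeriv n f =ᶠ[nhds v]
            (fun w => (∏ i ∈ range n, (z + i)) * Complex.exp (-(z + n) * Complex.log (1 - w))) :=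
          Filter.eventuallyEq_of_mem (Metric.isOpen_ball.mem_nhds hv) ih
        rw [hev.deriv_eq]
        exact (hasDerivAt_G z n (hmem v hv)).deriv
  have hw' : w ∈ Metric.ball (0 : ℂ) 1 := by simpa [Metric.mem_ball] using hw
  have H := Complex.hasSum_taylorSeries_on_ball hdiff hw'
  have h0 : (0 : ℂ) ∈ Metric.ball (0 : ℂ) 1 := by simp
  have hcoef : ∀ n : ℕ, iteratedDeriv n f 0 = ∏ i ∈ range n, (z + i) := by
    intro n
    rw [key n h0]
    simp
  simp only [hcoef, sub_zero, smul_eq_mul] at H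
  convert H using 2 with a
  · rfl
  · ring

lemma norm_c_le (z : ℂ) (a : ℕ) :
    ‖(∏ i ∈ range a, (z + i)) / (a.factorial : ℂ)‖
      ≤ (∏ i ∈ range a, (‖z‖ + i)) / (a.factorial : ℝ) := by
  rw [norm_div, Complex.norm_natCast]
  gcongr
  calc ‖∏ i ∈ range a, (z + i)‖ = ∏ i ∈ range a, ‖z + (i : ℂ)‖ := norm_prod _ _
    _ ≤ ∏ i ∈ range a, (‖z‖ + i) := by
        apply Finset.prod_le_prod (fun i _ => norm_nonneg _)
        intro i _
        calc ‖z + (i : ℂ)‖ ≤ ‖z‖ + ‖(i : ℂ)‖ := norm_add_le _ _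
          _ = ‖z‖ + i := by rw [Complex.norm_natCast]

lemma summable_cr (z : ℂ) {r : ℝ} (h0 : 0 ≤ r) (h1 : r < 1) :
    Summable (fun a : ℕ => (∏ i ∈ range a, (‖z‖ + i)) / (a.factorial : ℝ) * r ^ a) := by
  have hs := (binomialSeries_hasSum (‖z‖ : ℂ) (w := (r : ℂ))
    (by rwa [Complex.norm_real, Real.norm_eq_abs, _root_.abs_of_nonneg h0])).summable
  rw [← Complex.summable_ofReal]
  convert hs using 2 with a
  push_cast
  ring


lemma dC_prime_pow {p : ℕ} (hp : p.Prime) (z : ℂ) (a : ℕ) :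
    dC z (p ^ a) = (∏ i ∈ range a, (z + i)) / (a.factorial : ℂ) := by
  rcases Nat.eq_zero_or_pos a with rfl | ha
  · simp [dC]
  rw [dC, if_neg (pow_ne_zero a hp.pos.ne')]
  rw [Nat.primeFactors_prime_pow ha.ne' hp, Nat.Prime.factorization_pow hp]
  simp

lemma integral_exp_diff (a b : ℕ) :
    (∫ θ in Set.Ioc (-Real.pi) Real.pi,
        Complex.exp (θ * I) ^ a * Complex.exp (-θ * I) ^ b) =
      if a = b then ((2 * Real.pi : ℝ) : ℂ) else 0 := by
  rw [← intervalIntegral.integral_of_le (by linarith [Real.pi_pos] : -Real.pi ≤ Real.pi)]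
  have hfun : ∀ θ : ℝ, Complex.exp (θ * I) ^ a * Complex.exp (-θ * I) ^ b
      = Complex.exp ((((a : ℂ) - b) * I) * θ) := by
    intro θ
    rw [← Complex.exp_nat_mul, ← Complex.exp_nat_mul, ← Complex.exp_add]
    ring_nf
  rw [intervalIntegral.integral_congr (fun θ _ => hfun θ)]
  rcases eq_or_ne a b with rfl | hab
  · rw [if_pos rfl]
    simp only [sub_self, zero_mul, Complex.exp_zero]
    rw [intervalIntegral.integral_const, Complex.real_smul, mul_one]
    push_cast
    ring
  · have hd : ((a : ℂ) - b) * I ≠ 0 := by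
      apply mul_ne_zero _ Complex.I_ne_zero
      rw [sub_ne_zero]
      exact_mod_cast hab
    rw [integral_exp_mul_complex hd, if_neg hab]
    have : Complex.exp (((a : ℂ) - b) * I * Real.pi)
        = Complex.exp (((a : ℂ) - b) * I * (-Real.pi)) := by
      have h1 := Complex.exp_int_mul_two_pi_mul_I ((a : ℤ) - (b : ℤ))
      push_cast at h1
      calc Complex.exp (((a : ℂ) - b) * I * Real.pi)
          = Complex.exp (((a : ℂ) - b) * I * (-Real.pi)) *
              Complex.exp (((a : ℂ) - b) * (2 * Real.pi * I)) := by
            rw [← Complex.exp_add]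
            congr 1
            push_cast
            ring
        _ = Complex.exp (((a : ℂ) - b) * I * (-Real.pi)) := by rw [h1, mul_one]
    rw [Complex.ofReal_neg, this, sub_self, zero_div]


set_option maxHeartbeats 1000000 in
/-- **Lemma 3.2.** For all `z₁, z₂ ∈ ℂ` and `σ > 1/2`,
`∑_{a ≥ 0} d_{z₁}(p^a) d_{z₂}(p^a)/p^{2σa}
  = (1/2π) ∫_{-π}^{π} (1 - e^{iθ}/p^σ)^{-z₁} (1 - e^{-iθ}/p^σ)^{-z₂} dθ`. -/
theorem euler_factor_integral_representation :
    ∀ p : ℕ, p.Prime → ∀ z₁ z₂ : ℂ, ∀ σ : ℝ, 1 / 2 < σ →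
      ∑' a : ℕ, dC z₁ (p ^ a) * dC z₂ (p ^ a) / (((p : ℝ) ^ (2 * σ * a) : ℝ) : ℂ) =
        ((2 * Real.pi : ℝ) : ℂ)⁻¹ *
          ∫ θ in (-Real.pi)..Real.pi,
            (1 - Complex.exp (θ * Complex.I) / (p : ℂ) ^ (σ : ℂ)) ^ (-z₁) *
              (1 - Complex.exp (-θ * Complex.I) / (p : ℂ) ^ (σ : ℂ)) ^ (-z₂) := by

  intro p hp z₁ z₂ σ hσ
  have hp1 : (1 : ℝ) < p := by exact_mod_cast hp.one_lt
  have hp0 : (0 : ℝ) < p := by linarith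
  set r : ℝ := (p : ℝ) ^ (-σ) with hrdef
  have hr0 : 0 < r := Real.rpow_pos_of_pos hp0 _
  have hr1 : r < 1 := Real.rpow_lt_one_of_one_lt_of_neg hp1 (by linarith)
  set c₁ : ℕ → ℂ := fun a => (∏ i ∈ range a, (z₁ + i)) / (a.factorial : ℂ) with hc₁
  set c₂ : ℕ → ℂ := fun a => (∏ i ∈ range a, (z₂ + i)) / (a.factorial : ℂ) with hc₂
  set w₁ : ℝ → ℂ := fun θ => (r : ℂ) * Complex.exp (θ * I) with hw₁
  set w₂ : ℝ → ℂ := fun θ => (r : ℂ) * Complex.exp (-θ * I) with hw₂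
  have hnexp : ∀ x : ℝ, ‖Complex.exp ((x : ℂ) * I)‖ = 1 := fun x => by
    simp [Complex.norm_exp]
  have hnw₁ : ∀ θ : ℝ, ‖w₁ θ‖ = r := by
    intro θ
    rw [hw₁]
    simp only [norm_mul, Complex.norm_real, Real.norm_eq_abs, _root_.abs_of_nonneg hr0.le]
    rw [hnexp θ, mul_one]
  have hnw₂ : ∀ θ : ℝ, ‖w₂ θ‖ = r := by
    intro θ
    rw [hw₂]
    simp only [norm_mul, Complex.norm_real, Real.norm_eq_abs, _root_.abs_of_nonneg hr0.le]
    have : ((-θ : ℝ) : ℂ) * I = -(θ : ℂ) * I := by push_cast; ring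
    rw [show (-(θ:ℂ) * I) = ((-θ : ℝ) : ℂ) * I by push_cast; ring, hnexp (-θ), mul_one]
  have hlt₁ : ∀ θ : ℝ, ‖w₁ θ‖ < 1 := fun θ => by rw [hnw₁]; exact hr1
  have hlt₂ : ∀ θ : ℝ, ‖w₂ θ‖ < 1 := fun θ => by rw [hnw₂]; exact hr1
  have hps : ((p : ℂ) ^ (σ : ℂ))⁻¹ = (r : ℂ) := by
    have hcast : ((p : ℕ) : ℂ) = (((p : ℝ)) : ℂ) := by norm_cast
    rw [hcast, ← Complex.ofReal_cpow hp0.le, ← Complex.ofReal_inv, hrdef,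
      ← Real.rpow_neg hp0.le]
  have hdiv₁ : ∀ θ : ℝ, Complex.exp ((θ : ℂ) * I) / (p : ℂ) ^ (σ : ℂ) = w₁ θ := by
    intro θ
    rw [div_eq_mul_inv, hps, mul_comm]
  have hdiv₂ : ∀ θ : ℝ, Complex.exp (-(θ : ℂ) * I) / (p : ℂ) ^ (σ : ℂ) = w₂ θ := by
    intro θ
    rw [div_eq_mul_inv, hps, mul_comm]
  set T : ℕ × ℕ → ℝ → ℂ :=
    fun q θ => (c₁ q.1 * w₁ θ ^ q.1) * (c₂ q.2 * w₂ θ ^ q.2) with hT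
  -- summability data
  have hC₁ : Summable (fun a : ℕ => (∏ i ∈ range a, (‖z₁‖ + i)) / (a.factorial : ℝ) * r ^ a) :=
    summable_cr z₁ hr0.le hr1
  have hC₂ : Summable (fun a : ℕ => (∏ i ∈ range a, (‖z₂‖ + i)) / (a.factorial : ℝ) * r ^ a) :=
    summable_cr z₂ hr0.le hr1
  have hb₁ : ∀ (θ : ℝ) (a : ℕ),
      ‖c₁ a * w₁ θ ^ a‖ ≤ (∏ i ∈ range a, (‖z₁‖ + i)) / (a.factorial : ℝ) * r ^ a := by
    intro θ a
    rw [norm_mul, norm_pow, hnw₁]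
    exact mul_le_mul_of_nonneg_right (norm_c_le z₁ a) (pow_nonneg hr0.le a)
  have hb₂ : ∀ (θ : ℝ) (a : ℕ),
      ‖c₂ a * w₂ θ ^ a‖ ≤ (∏ i ∈ range a, (‖z₂‖ + i)) / (a.factorial : ℝ) * r ^ a := by
    intro θ a
    rw [norm_mul, norm_pow, hnw₂]
    exact mul_le_mul_of_nonneg_right (norm_c_le z₂ a) (pow_nonneg hr0.le a)
  have hKsum : Summable (fun q : ℕ × ℕ =>
      ((∏ i ∈ range q.1, (‖z₁‖ + i)) / (q.1.factorial : ℝ) * r ^ q.1) *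
        ((∏ i ∈ range q.2, (‖z₂‖ + i)) / (q.2.factorial : ℝ) * r ^ q.2)) :=
    hC₁.mul_of_nonneg hC₂ (fun a => by positivity) (fun a => by positivity)
  have hTsum : ∀ θ : ℝ, Summable (fun q : ℕ × ℕ => T q θ) := by
    intro θ
    apply Summable.of_norm
    apply hKsum.of_nonneg_of_le (fun q => norm_nonneg _)
    intro q
    rw [hT, norm_mul]
    exact mul_le_mul (hb₁ θ q.1) (hb₂ θ q.2) (norm_nonneg _)
      (by positivity)
  -- pointwise identity on the integrand
  have hintg : ∀ θ : ℝ,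
      (1 - Complex.exp ((θ : ℂ) * I) / (p : ℂ) ^ (σ : ℂ)) ^ (-z₁) *
        (1 - Complex.exp (-(θ : ℂ) * I) / (p : ℂ) ^ (σ : ℂ)) ^ (-z₂)
      = ∑' q : ℕ × ℕ, T q θ := by
    intro θ
    rw [hdiv₁, hdiv₂,
      Complex.cpow_def_of_ne_zero (one_sub_ne_zero (hlt₁ θ)),
      Complex.cpow_def_of_ne_zero (one_sub_ne_zero (hlt₂ θ)),
      mul_comm (Complex.log (1 - w₁ θ)) (-z₁), mul_comm (Complex.log (1 - w₂ θ)) (-z₂)]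
    exact (((binomialSeries_hasSum z₁ (hlt₁ θ)).mul
      (binomialSeries_hasSum z₂ (hlt₂ θ)) (hTsum θ)).tsum_eq).symm
  -- the integral of each term
  have hint_T : ∀ q : ℕ × ℕ, (∫ θ in Set.Ioc (-Real.pi) Real.pi, T q θ)
      = if q.1 = q.2 then ((2 * Real.pi : ℝ) : ℂ) * (c₁ q.1 * c₂ q.2 * (r : ℂ) ^ (q.1 + q.2))
        else 0 := by
    intro ⟨a, b⟩
    have : ∀ θ : ℝ, T (a, b) θ =
        (c₁ a * c₂ b * (r : ℂ) ^ (a + b)) *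
          (Complex.exp ((θ : ℂ) * I) ^ a * Complex.exp (-(θ : ℂ) * I) ^ b) := by
      intro θ
      rw [hT, hw₁, hw₂]
      simp only [mul_pow, pow_add]
      ring
    rw [MeasureTheory.setIntegral_congr_fun measurableSet_Ioc (fun θ _ => this θ),
      MeasureTheory.integral_const_mul, integral_exp_diff a b]
    rcases eq_or_ne a b with rfl | hab
    · rw [if_pos rfl, if_pos rfl]; ring
    · rw [if_neg hab, if_neg hab, mul_zero]
  -- integrability of each term
  have hTcont : ∀ q : ℕ × ℕ, Continuous (T q) := by
    intro q
    have h1 : Continuous w₁ := by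
      rw [hw₁]
      exact continuous_const.mul
        (Complex.continuous_exp.comp (Complex.continuous_ofReal.mul continuous_const))
    have h2 : Continuous w₂ := by
      rw [hw₂]
      exact continuous_const.mul
        (Complex.continuous_exp.comp ((Complex.continuous_ofReal.neg).mul continuous_const))
    rw [hT]
    exact (continuous_const.mul (h1.pow _)).mul (continuous_const.mul (h2.pow _))
  -- summability of the integrals of norms
  have hvol : (MeasureTheory.volume (Set.Ioc (-Real.pi) Real.pi)).toReal = 2 * Real.pi := by
    rw [Real.volume_Ioc, ENNReal.toReal_ofReal (by linarith [Real.pi_pos])]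
    ring
  have hIle : ∀ q : ℕ × ℕ, (∫ θ in Set.Ioc (-Real.pi) Real.pi, ‖T q θ‖) ≤
      (2 * Real.pi) * (((∏ i ∈ range q.1, (‖z₁‖ + i)) / (q.1.factorial : ℝ) * r ^ q.1) *
        ((∏ i ∈ range q.2, (‖z₂‖ + i)) / (q.2.factorial : ℝ) * r ^ q.2)) := by
    intro q
    calc (∫ θ in Set.Ioc (-Real.pi) Real.pi, ‖T q θ‖)
        ≤ ∫ _θ in Set.Ioc (-Real.pi) Real.pi,
            (((∏ i ∈ range q.1, (‖z₁‖ + i)) / (q.1.factorial : ℝ) * r ^ q.1) *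
              ((∏ i ∈ range q.2, (‖z₂‖ + i)) / (q.2.factorial : ℝ) * r ^ q.2)) := by
          apply MeasureTheory.setIntegral_mono_on
            ((hTcont q).norm.integrableOn_Ioc) (MeasureTheory.integrableOn_const
              (by rw [Real.volume_Ioc]; exact ENNReal.ofReal_ne_top))
            measurableSet_Ioc
          intro θ _
          rw [hT, norm_mul]
          exact mul_le_mul (hb₁ θ q.1) (hb₂ θ q.2) (norm_nonneg _) (by positivity)
      _ = (2 * Real.pi) * _ := by
          rw [MeasureTheory.setIntegral_const, smul_eq_mul, MeasureTheory.measureReal_def, hvol]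
  have hSint : Summable (fun q : ℕ × ℕ => ∫ θ in Set.Ioc (-Real.pi) Real.pi, ‖T q θ‖) := by
    apply (hKsum.mul_left (2 * Real.pi)).of_nonneg_of_le
      (fun q => MeasureTheory.integral_nonneg (fun θ => norm_nonneg _)) hIle
  have hswap : (∫ θ in Set.Ioc (-Real.pi) Real.pi, ∑' q : ℕ × ℕ, T q θ)
      = ∑' q : ℕ × ℕ, ∫ θ in Set.Ioc (-Real.pi) Real.pi, T q θ :=
    (MeasureTheory.integral_tsum_of_summable_integral_norm
      (fun q => (hTcont q).integrableOn_Ioc) hSint).symm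
  -- the diagonal sum
  have hdiag : (∑' q : ℕ × ℕ, if q.1 = q.2 then
        ((2 * Real.pi : ℝ) : ℂ) * (c₁ q.1 * c₂ q.2 * (r : ℂ) ^ (q.1 + q.2)) else 0)
      = ∑' a : ℕ, ((2 * Real.pi : ℝ) : ℂ) * (c₁ a * c₂ a * (r : ℂ) ^ (2 * a)) := by
    apply tsum_eq_tsum_of_ne_zero_bij (fun x => ((x : ℕ), (x : ℕ)))
    · intro x y h
      exact Subtype.ext (by simpa using congrArg Prod.fst h)
    · rintro ⟨a, b⟩ hq
      simp only [Function.mem_support] at hq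
      by_cases h : a = b
      · subst h
        refine ⟨⟨a, ?_⟩, rfl⟩
        simp only [Function.mem_support]
        intro hcon
        apply hq
        rw [if_pos rfl, ← two_mul a] at *
        exact hcon
      · exact absurd (by rw [if_neg h]) hq
    · intro x
      rw [if_pos rfl, ← two_mul]
  -- LHS rewriting
  have hLHS : ∀ a : ℕ, dC z₁ (p ^ a) * dC z₂ (p ^ a) / (((p : ℝ) ^ (2 * σ * a) : ℝ) : ℂ)
      = c₁ a * c₂ a * (r : ℂ) ^ (2 * a) := by
    intro a
    rw [dC_prime_pow hp, dC_prime_pow hp]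
    have hpow : (((p : ℝ) ^ (2 * σ * a) : ℝ))⁻¹ = r ^ (2 * a) := by
      rw [hrdef, ← Real.rpow_natCast ((p : ℝ) ^ (-σ)) (2 * a), ← Real.rpow_mul hp0.le,
        ← Real.rpow_neg hp0.le]
      congr 1
      push_cast
      ring
    rw [div_eq_mul_inv, ← Complex.ofReal_inv, hpow]
    push_cast
    ring
  -- final computation
  rw [tsum_congr hLHS]
  rw [intervalIntegral.integral_congr (fun θ _ => hintg θ),
    intervalIntegral.integral_of_le (by linarith [Real.pi_pos] : -Real.pi ≤ Real.pi),
    hswap, tsum_congr hint_T, hdiag, tsum_mul_left, ← mul_assoc,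
    inv_mul_cancel₀ (by
      push_cast
      exact mul_ne_zero two_ne_zero (Complex.ofReal_ne_zero.2 Real.pi_ne_zero)), one_mul]
end

section
/- For every integer j ≥ 1 and every real X > 3, ∑_{n=1}^∞ (d_j(n)/n) e^{−n/X} ≤ (log 3X)^j. -/
open Complex MeasureTheory Filter Set

section DivisorAux
open ArithmeticFunction
open scoped ArithmeticFunction.zeta

lemma hockey (j a : ℕ) :
    ∑ i ∈ Finset.range (a+1), Nat.choose (j + i - 1) i = Nat.choose (j + a) a := by
  induction a with
  | zero => simp
  | succ a ih =>
      rw [Finset.sum_range_succ, ih]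
      have h1 : j + (a+1) - 1 = j + a := by omega
      have h2 : j + (a+1) = (j + a) + 1 := by omega
      rw [h1, h2, Nat.choose_succ_succ]

/-- `dNat j` as an arithmetic function. -/
def dA (j : ℕ) : ArithmeticFunction ℕ := ⟨dNat j, by simp [dNat]⟩

lemma dA_apply (j n : ℕ) : dA j n = dNat j n := rfl

lemma dA_mult (j : ℕ) : (dA j).IsMultiplicative := by
  constructor
  · show dNat j 1 = 1
    simp [dNat]
  · intro m n hmn
    show dNat j (m * n) = dNat j m * dNat j n
    rcases eq_or_ne m 0 with rfl | hm
    · have : n = 1 := Nat.coprime_zero_left n |>.mp hmn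
      subst this; simp [dNat]
    rcases eq_or_ne n 0 with rfl | hn
    · have : m = 1 := Nat.coprime_zero_right m |>.mp hmn
      subst this; simp [dNat]
    unfold dNat
    rw [if_neg (Nat.mul_ne_zero hm hn), if_neg hm, if_neg hn,
      Nat.primeFactors_mul hm hn, Finset.prod_union hmn.disjoint_primeFactors]
    have hfm : ∀ p ∈ m.primeFactors, (m * n).factorization p = m.factorization p := by
      intro p hp
      have hpn : n.factorization p = 0 := by
        refine Nat.factorization_eq_zero_of_not_dvd fun hd => ?_
        have hpm : p ∣ m := Nat.dvd_of_mem_primeFactors hp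
        have h1 : p ∣ Nat.gcd m n := Nat.dvd_gcd hpm hd
        rw [Nat.Coprime.gcd_eq_one hmn] at h1
        exact (Nat.prime_of_mem_primeFactors hp).one_lt.ne' (Nat.eq_one_of_dvd_one h1)
      rw [Nat.factorization_mul hm hn]; simp [hpn]
    have hfn : ∀ p ∈ n.primeFactors, (m * n).factorization p = n.factorization p := by
      intro p hp
      have hpm : m.factorization p = 0 := by
        refine Nat.factorization_eq_zero_of_not_dvd fun hd => ?_
        have hpn : p ∣ n := Nat.dvd_of_mem_primeFactors hp
        have h1 : p ∣ Nat.gcd m n := Nat.dvd_gcd hd hpn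
        rw [Nat.Coprime.gcd_eq_one hmn] at h1
        exact (Nat.prime_of_mem_primeFactors hp).one_lt.ne' (Nat.eq_one_of_dvd_one h1)
      rw [Nat.factorization_mul hm hn]; simp [hpm]
    congr 1
    · exact Finset.prod_congr rfl fun p hp => by rw [hfm p hp]
    · exact Finset.prod_congr rfl fun p hp => by rw [hfn p hp]

lemma dA_prime_pow (j : ℕ) {p : ℕ} (hp : p.Prime) (a : ℕ) :
    dA j (p ^ a) = Nat.choose (j + a - 1) a := by
  rcases Nat.eq_zero_or_pos a with rfl | ha
  · show dNat j 1 = _; simp [dNat]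
  show dNat j (p ^ a) = _
  unfold dNat
  rw [if_neg (pow_ne_zero a hp.pos.ne'),
    Nat.primeFactors_prime_pow ha.ne' hp, hp.factorization_pow]
  simp

lemma dA_eq (j : ℕ) : dA j = (ζ : ArithmeticFunction ℕ) ^ j := by
  induction j with
  | zero =>
      rw [pow_zero]
      rw [IsMultiplicative.eq_iff_eq_on_prime_powers (dA 0) (dA_mult 0) 1 isMultiplicative_one]
      intro p i hp
      rw [dA_prime_pow 0 hp i]
      rcases Nat.eq_zero_or_pos i with rfl | hi
      · simp
      · have hne : p ^ i ≠ 1 := (Nat.one_lt_pow hi.ne' hp.one_lt).ne'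
        rw [Nat.choose_eq_zero_of_lt (by omega), one_apply, if_neg hne]
  | succ j ih =>
      rw [pow_succ, ← ih]
      rw [IsMultiplicative.eq_iff_eq_on_prime_powers (dA (j+1)) (dA_mult (j+1)) _ ((dA_mult j).mul isMultiplicative_zeta)]
      intro p i hp
      rw [dA_prime_pow (j+1) hp i, mul_zeta_apply, Nat.sum_divisors_prime_pow hp]
      have : ∀ x ∈ Finset.range (i+1), dA j (p ^ x) = Nat.choose (j + x - 1) x :=
        fun x _ => dA_prime_pow j hp x
      rw [Finset.sum_congr rfl this, hockey]
      congr 1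
      omega

lemma dNat_succ (j n : ℕ) :
    dNat (j+1) n = ∑ p ∈ n.divisorsAntidiagonal, dNat j p.1 := by
  have h1 : dA (j+1) n = (dA j * ζ) n := by
    rw [dA_eq (j+1), dA_eq j, pow_succ]
  rw [dA_apply] at h1
  rw [h1, mul_apply]
  refine Finset.sum_congr rfl fun p hp => ?_
  have h2 : p.2 ≠ 0 := Nat.right_ne_zero_of_mem_divisorsAntidiagonal hp
  simp [zeta_apply, h2, dA_apply]

lemma dNat_one_apply {n : ℕ} (hn : n ≠ 0) : dNat 1 n = 1 := by
  unfold dNat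
  rw [if_neg hn]
  exact Finset.prod_eq_one fun p _ => by simp

variable {X : ℝ}
variable {X : ℝ}

lemma geom_log_sum (hX : 3 < X) (N : ℕ) :
    ∑ n ∈ Finset.range N, Real.exp (-(1:ℝ)/X) ^ n / n ≤ Real.log X + 1/X := by
  have hX0 : (0:ℝ) < X := by linarith
  set r : ℝ := Real.exp (-(1:ℝ)/X) with hr
  have hr0 : 0 < r := Real.exp_pos _
  have hr1 : r < 1 := by
    rw [hr, Real.exp_lt_one_iff, neg_div]
    have : (0:ℝ) < 1/X := by positivity
    linarith
  have hre : r * Real.exp (1/X) = 1 := by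
    rw [hr, ← Real.exp_add, show -(1:ℝ)/X + 1/X = 0 by ring, Real.exp_zero]
  have hlogr : Real.log r = -(1/X) := by rw [hr]; rw [show -(1:ℝ)/X = -(1/X) by ring, Real.log_exp]
  have hRHS : -Real.log (1 - r) ≤ Real.log X + 1/X := by
    have h1 : 1/X + 1 ≤ Real.exp (1/X) := Real.add_one_le_exp _
    have key : r/X + r ≤ 1 := by
      have := mul_le_mul_of_nonneg_left h1 hr0.le
      rw [hre] at this
      calc r/X + r = r * (1/X + 1) := by ring
        _ ≤ 1 := this
    have hpos : 0 < r/X := by positivity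
    have h2 : r/X ≤ 1 - r := by linarith
    have h3 : Real.log (r/X) ≤ Real.log (1 - r) := Real.log_le_log hpos h2
    have h4 : Real.log (r/X) = Real.log r - Real.log X := Real.log_div hr0.ne' hX0.ne'
    rw [h4, hlogr] at h3
    linarith
  have hsum : HasSum (fun n : ℕ => r ^ (n+1) / (n+1)) (-Real.log (1 - r)) :=
    Real.hasSum_pow_div_log_of_abs_lt_one (by rw [abs_of_pos hr0]; exact hr1)
  refine le_trans ?_ hRHS
  rcases N with _ | M
  · simp only [Finset.range_zero, Finset.sum_empty]
    have : Real.log (1-r) ≤ 0 := Real.log_nonpos (by linarith) (by linarith)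
    linarith
  · rw [Finset.sum_range_succ']
    have h0 : r ^ 0 / ((0:ℕ):ℝ) = 0 := by norm_num
    rw [h0, add_zero]
    have := sum_le_hasSum (Finset.range M) (fun i _ => by positivity) hsum
    refine le_trans (le_of_eq ?_) this
    refine Finset.sum_congr rfl fun i _ => ?_
    push_cast
    ring

lemma K_le (hX : 3 < X) :
    Real.exp (1/X) * (Real.log X + 1/X) ≤ Real.log (3 * X) := by
  have hX0 : (0:ℝ) < X := by linarith
  have h3 : (1:ℝ) ≤ Real.log 3 := by
    rw [Real.le_log_iff_exp_le (by norm_num)]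
    have := Real.exp_one_lt_d9
    linarith
  have hlX : Real.log X ≤ Real.log 3 + X/3 - 1 := by
    have h1 : Real.log (X/3) ≤ X/3 - 1 := Real.log_le_sub_one_of_pos (by positivity)
    have h2 : Real.log (X/3) = Real.log X - Real.log 3 :=
      Real.log_div hX0.ne' (by norm_num)
    linarith
  have hl3 : Real.log 3 ≤ Real.log X := Real.log_le_log (by norm_num) (by linarith)
  have hexp : Real.exp (1/X) ≤ X/(X-1) := by
    have h1 : 1 - 1/X ≤ Real.exp (-(1/X)) := by
      have := Real.add_one_le_exp (-(1/X)); linarith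
    have h2 : (0:ℝ) < 1 - 1/X := by
      have : 1/X < 1/3 := by
        rw [div_lt_div_iff₀ hX0 (by norm_num)]; linarith
      linarith
    have h4 : (Real.exp (-(1/X)))⁻¹ ≤ (1 - 1/X)⁻¹ := by
      exact inv_anti₀ h2 h1
    rw [← Real.exp_neg, neg_neg] at h4
    refine h4.trans (le_of_eq ?_)
    field_simp
  rw [Real.log_mul (by norm_num) hX0.ne']
  set l := Real.log X
  set t := Real.log 3
  have hl0 : 0 < l := by linarith
  have step : X/(X-1) * (l + 1/X) ≤ t + l := by
    rw [div_mul_eq_mul_div, div_le_iff₀ (by linarith : (0:ℝ) < X - 1)]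
    have expand : X * (l + 1/X) = X * l + 1 := by field_simp
    rw [expand]
    nlinarith [mul_le_mul_of_nonneg_left hlX (by linarith : (0:ℝ) ≤ X - 3),
      mul_le_mul_of_nonneg_left h3 (by linarith : (0:ℝ) ≤ X - 3)]
  refine le_trans ?_ step
  apply mul_le_mul_of_nonneg_right hexp
  positivity

variable {X : ℝ}

lemma add_sub_one_le_mul {a b : ℕ} (ha : 1 ≤ a) (hb : 1 ≤ b) : a + b - 1 ≤ a * b := by
  obtain ⟨a', rfl⟩ := Nat.exists_eq_add_of_le ha
  obtain ⟨b', rfl⟩ := Nat.exists_eq_add_of_le hb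
  calc 1 + a' + (1 + b') - 1 = a' + b' + 1 := by omega
    _ ≤ a' * b' + (a' + b' + 1) := Nat.le_add_left _ _
    _ = (1 + a') * (1 + b') := by ring

lemma term_ineq (hX : 3 < X) (d a b : ℕ) :
    (d:ℝ)/((a*b : ℕ):ℝ) * Real.exp (-(1:ℝ)/X) ^ (a*b) ≤
      Real.exp (1/X) * ((d:ℝ)/a * Real.exp (-(1:ℝ)/X) ^ a) *
        (Real.exp (-(1:ℝ)/X) ^ b / b) := by
  have hX0 : (0:ℝ) < X := by linarith
  set r : ℝ := Real.exp (-(1:ℝ)/X) with hr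
  have hr0 : 0 < r := Real.exp_pos _
  have hr1 : r ≤ 1 := by
    rw [hr]
    refine Real.exp_le_one_iff.mpr ?_
    rw [neg_div]
    have : (0:ℝ) < 1/X := by positivity
    linarith
  have hre : r * Real.exp (1/X) = 1 := by
    rw [hr, ← Real.exp_add, show -(1:ℝ)/X + 1/X = 0 by ring, Real.exp_zero]
  rcases Nat.eq_zero_or_pos a with rfl | ha
  · simp
  rcases Nat.eq_zero_or_pos b with rfl | hb
  · simp
  have hpow : r ^ (a*b) ≤ r ^ (a+b-1) :=
    pow_le_pow_of_le_one hr0.le hr1 (add_sub_one_le_mul ha hb)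
  have hab : ((a:ℝ) * b) ≠ 0 := by positivity
  have hrw : Real.exp (1/X) * ((d:ℝ)/a * r ^ a) * (r ^ b / b)
      = (d:ℝ)/((a:ℝ)*b) * r ^ (a+b-1) := by
    have h1 : r ^ (a+b-1) * r = r ^ (a+b) := by
      rw [← pow_succ]
      congr 1
      omega
    have h2 : r ^ (a+b) = r ^ a * r ^ b := pow_add r a b
    have h3 : r ^ (a+b-1) = r ^ a * r ^ b * Real.exp (1/X) := by
      have : r ^ (a+b-1) * (r * Real.exp (1/X)) = r ^ a * r ^ b * Real.exp (1/X) := by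
        rw [← mul_assoc, h1, h2]
      rwa [hre, mul_one] at this
    rw [h3]
    field_simp
  rw [hrw]
  push_cast
  apply mul_le_mul_of_nonneg_left hpow
  positivity

lemma partial_bound (hX : 3 < X) :
    ∀ j : ℕ, 1 ≤ j → ∀ N : ℕ,
      ∑ n ∈ Finset.range N, (dNat j n : ℝ)/n * Real.exp (-(1:ℝ)/X) ^ n
        ≤ (Real.exp (1/X) * (Real.log X + 1/X)) ^ j := by
  have hX0 : (0:ℝ) < X := by linarith
  set r : ℝ := Real.exp (-(1:ℝ)/X) with hr
  set K : ℝ := Real.exp (1/X) * (Real.log X + 1/X) with hK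
  have hlogX : (0:ℝ) ≤ Real.log X := Real.log_nonneg (by linarith)
  have hL' : (0:ℝ) ≤ Real.log X + 1/X := by positivity
  have hK0 : (0:ℝ) ≤ K := by positivity
  intro j hj
  induction j, hj using Nat.le_induction with
  | base =>
      intro N
      rw [pow_one, hK]
      have he1 : (1:ℝ) ≤ Real.exp (1/X) := by
        rw [show (1:ℝ) = Real.exp 0 by simp]
        apply Real.exp_le_exp.mpr
        positivity
      calc ∑ n ∈ Finset.range N, (dNat 1 n : ℝ)/n * r ^ n
          = ∑ n ∈ Finset.range N, r ^ n / n := by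
            refine Finset.sum_congr rfl fun n _ => ?_
            rcases eq_or_ne n 0 with rfl | hn
            · simp [dNat]
            · rw [dNat_one_apply hn]; push_cast; ring
        _ ≤ Real.log X + 1/X := geom_log_sum hX N
        _ ≤ Real.exp (1/X) * (Real.log X + 1/X) := by nlinarith
  | succ j hj ih =>
      intro N
      set F : ℕ × ℕ → ℝ := fun p => (dNat j p.1 : ℝ)/((p.1 * p.2 : ℕ):ℝ) * r ^ (p.1 * p.2)
        with hF
      have hFnonneg : ∀ p : ℕ × ℕ, 0 ≤ F p := by
        intro p; rw [hF]; positivity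
      have step1 : ∑ n ∈ Finset.range N, (dNat (j+1) n : ℝ)/n * r ^ n
          = ∑ n ∈ Finset.range N, ∑ p ∈ n.divisorsAntidiagonal, F p := by
        refine Finset.sum_congr rfl fun n _ => ?_
        rw [dNat_succ]
        push_cast
        rw [Finset.sum_div, Finset.sum_mul]
        refine Finset.sum_congr rfl fun p hp => ?_
        obtain ⟨hpn, -⟩ := Nat.mem_divisorsAntidiagonal.mp hp
        rw [hF]
        simp only
        rw [hpn]
      have hdisj : ((Finset.range N : Finset ℕ) : Set ℕ).PairwiseDisjoint
          Nat.divisorsAntidiagonal := by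
        intro m _ n _ hmn
        refine Finset.disjoint_left.mpr fun p hpm hpn => ?_
        obtain ⟨h1, -⟩ := Nat.mem_divisorsAntidiagonal.mp hpm
        obtain ⟨h2, -⟩ := Nat.mem_divisorsAntidiagonal.mp hpn
        exact hmn (h1 ▸ h2 ▸ rfl)
      have step2 : ∑ n ∈ Finset.range N, ∑ p ∈ n.divisorsAntidiagonal, F p
          ≤ ∑ p ∈ Finset.range N ×ˢ Finset.range N, F p := by
        rw [← Finset.sum_biUnion hdisj]
        refine Finset.sum_le_sum_of_subset_of_nonneg ?_ fun p _ _ => hFnonneg p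
        intro p hp
        obtain ⟨n, hn, hpn⟩ := Finset.mem_biUnion.mp hp
        obtain ⟨h1, h2⟩ := Nat.mem_divisorsAntidiagonal.mp hpn
        rw [Finset.mem_product, Finset.mem_range, Finset.mem_range]
        rw [Finset.mem_range] at hn
        constructor
        · calc p.1 ≤ n := h1 ▸ Nat.le_mul_of_pos_right _ (Nat.pos_of_ne_zero
            (fun h => h2 (by rw [← h1, h, mul_zero])))
            _ < N := hn
        · calc p.2 ≤ n := h1 ▸ Nat.le_mul_of_pos_left _ (Nat.pos_of_ne_zero
            (fun h => h2 (by rw [← h1, h, zero_mul])))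
            _ < N := hn
      have step3 : ∑ p ∈ Finset.range N ×ˢ Finset.range N, F p
          ≤ ∑ p ∈ Finset.range N ×ˢ Finset.range N,
              Real.exp (1/X) * ((dNat j p.1 : ℝ)/p.1 * r ^ p.1) * (r ^ p.2 / p.2) := by
        refine Finset.sum_le_sum fun p _ => ?_
        exact term_ineq hX (dNat j p.1) p.1 p.2
      have step4 : ∑ p ∈ Finset.range N ×ˢ Finset.range N,
              Real.exp (1/X) * ((dNat j p.1 : ℝ)/p.1 * r ^ p.1) * (r ^ p.2 / p.2)
          = Real.exp (1/X) * (∑ a ∈ Finset.range N, (dNat j a : ℝ)/a * r ^ a)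
              * (∑ b ∈ Finset.range N, r ^ b / b) := by
        rw [Finset.sum_product]
        simp only
        have h1 : ∀ x : ℕ, ∑ y ∈ Finset.range N,
            Real.exp (1/X) * ((dNat j x : ℝ)/x * r ^ x) * (r ^ y / y)
            = Real.exp (1/X) * ((dNat j x : ℝ)/x * r ^ x)
              * ∑ y ∈ Finset.range N, r ^ y / y := fun x => (Finset.mul_sum _ _ _).symm
        rw [Finset.sum_congr rfl fun x _ => h1 x, ← Finset.sum_mul, ← Finset.mul_sum]
      have hSg0 : (0:ℝ) ≤ ∑ a ∈ Finset.range N, (dNat j a : ℝ)/a * r ^ a :=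
        Finset.sum_nonneg fun a _ => by positivity
      have hSh0 : (0:ℝ) ≤ ∑ b ∈ Finset.range N, r ^ b / b :=
        Finset.sum_nonneg fun b _ => by positivity
      calc ∑ n ∈ Finset.range N, (dNat (j+1) n : ℝ)/n * r ^ n
          ≤ Real.exp (1/X) * (∑ a ∈ Finset.range N, (dNat j a : ℝ)/a * r ^ a)
              * (∑ b ∈ Finset.range N, r ^ b / b) := by
            rw [step1, ← step4]
            exact le_trans step2 step3
        _ ≤ Real.exp (1/X) * K ^ j * (∑ b ∈ Finset.range N, r ^ b / b) := by
            apply mul_le_mul_of_nonneg_right _ hSh0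
            exact mul_le_mul_of_nonneg_left (ih N) (Real.exp_pos _).le
        _ ≤ Real.exp (1/X) * K ^ j * (Real.log X + 1/X) := by
            apply mul_le_mul_of_nonneg_left (geom_log_sum hX N)
            positivity
        _ = K ^ (j+1) := by rw [pow_succ, hK]; ring


end DivisorAux

/-- Inequality (3.1): for an integer `j ≥ 1` and `X > 3`,
`∑_{n ≥ 1} (d_j(n)/n) e^{-n/X} ≤ (log 3X)^j`. -/
theorem divisor_sum_smoothed_bound :
    ∀ j : ℕ, 1 ≤ j → ∀ X : ℝ, 3 < X →
      (Summable fun n : ℕ => (dNat j n : ℝ) / n * Real.exp (-(n : ℝ) / X)) ∧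
      ∑' n : ℕ, (dNat j n : ℝ) / n * Real.exp (-(n : ℝ) / X) ≤ Real.log (3 * X) ^ j := by
  intro j hj X hX
  have hX0 : (0:ℝ) < X := by linarith
  have hfe : ∀ n : ℕ, (dNat j n : ℝ) / n * Real.exp (-(n : ℝ) / X)
      = (dNat j n : ℝ) / n * Real.exp (-(1:ℝ)/X) ^ n := by
    intro n
    rw [← Real.exp_nat_mul, show (n:ℝ) * (-(1:ℝ)/X) = -(n:ℝ)/X by ring]
  have hnonneg : ∀ n : ℕ, 0 ≤ (dNat j n : ℝ) / n * Real.exp (-(n : ℝ) / X) := by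
    intro n; positivity
  have hK0 : (0:ℝ) ≤ Real.exp (1/X) * (Real.log X + 1/X) := by
    have hlogX : (0:ℝ) ≤ Real.log X := Real.log_nonneg (by linarith)
    positivity
  have hbound : ∀ N : ℕ, ∑ n ∈ Finset.range N,
      (dNat j n : ℝ) / n * Real.exp (-(n : ℝ) / X) ≤ Real.log (3 * X) ^ j := by
    intro N
    calc ∑ n ∈ Finset.range N, (dNat j n : ℝ) / n * Real.exp (-(n : ℝ) / X)
        = ∑ n ∈ Finset.range N, (dNat j n : ℝ)/n * Real.exp (-(1:ℝ)/X) ^ n :=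
          Finset.sum_congr rfl fun n _ => hfe n
      _ ≤ (Real.exp (1/X) * (Real.log X + 1/X)) ^ j := partial_bound hX j hj N
      _ ≤ Real.log (3 * X) ^ j := pow_le_pow_left₀ hK0 (K_le hX) j
  exact ⟨summable_of_sum_range_le hnonneg hbound,
    Real.tsum_le_of_sum_range_le hnonneg hbound⟩
end

section
/- Let p be a prime and s > 0 a real number, and define g_s(θ) := (1 − e^{iθ}/p)^{−s/(2i)} (1 − e^{−iθ}/p)^{s/(2i)} for θ ∈ [−π, π], using principal-branch powers. Then g_s is a real-valued, positive, continuous function on [−π, π], and with θ_p := arccos(1/p) one has min_{θ∈[−π,π]} g_s(θ) = g_s(−θ_p) = exp( −s·arctan(1/√(p²−1)) ) and max_{θ∈[−π,π]} g_s(θ) = g_s(θ_p) = exp( s·arctan(1/√(p²−1)) ). -/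
open Complex MeasureTheory Filter Set

/-- The function `g_s(θ) = (1 - e^{iθ}/p)^{-s/2i} (1 - e^{-iθ}/p)^{s/2i}` of Lemma 3.5. -/
noncomputable def gfun (p : ℕ) (s θ : ℝ) : ℂ :=
    (1 - Complex.exp (θ * Complex.I) / p) ^ (-((s : ℂ) / (2 * Complex.I))) *
      (1 - Complex.exp (-θ * Complex.I) / p) ^ ((s : ℂ) / (2 * Complex.I))

lemma arg_of_re_pos' {z : ℂ} (hz : 0 < z.re) : z.arg = Real.arctan (z.im / z.re) := by
  have h := Complex.abs_arg_lt_pi_div_two_iff.mpr (Or.inl hz)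
  rw [abs_lt] at h
  rw [← Complex.tan_arg, Real.arctan_tan h.1 h.2]

lemma gfun_eq (p : ℕ) (hp : 2 ≤ (p : ℝ)) (s θ : ℝ) :
    gfun p s θ =
      ((Real.exp (s * Real.arctan (Real.sin θ / ((p : ℝ) - Real.cos θ))) : ℝ) : ℂ) := by
  have hp0 : (0 : ℝ) < p := by linarith
  have hpc : ((p : ℂ)) ≠ 0 := by exact_mod_cast hp0.ne'
  set z : ℂ := 1 - Complex.exp (θ * Complex.I) / p with hzdef
  have hz : z = Complex.ofReal (1 - Real.cos θ / p) + Complex.ofReal (-Real.sin θ / p) * I := by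
    have he : Complex.exp (θ * I) = ↑(Real.cos θ) + ↑(Real.sin θ) * I := by
      rw [Complex.exp_mul_I, Complex.ofReal_cos, Complex.ofReal_sin]
    rw [hzdef, he]
    push_cast
    field_simp
    ring
  have hzre : z.re = 1 - Real.cos θ / p := by
    rw [hz]; simp [Complex.cos_ofReal_re, Complex.sin_ofReal_re]
  have hzim : z.im = -Real.sin θ / p := by
    rw [hz]; simp [Complex.cos_ofReal_re, Complex.sin_ofReal_re]
  have hcosle : Real.cos θ ≤ 1 := Real.cos_le_one θ
  have hzre_pos : 0 < z.re := by
    rw [hzre, sub_pos, div_lt_one hp0]; linarith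
  have hz0 : z ≠ 0 := by
    intro h; rw [h] at hzre_pos; simp at hzre_pos
  have hc0 : (starRingEnd ℂ) z ≠ 0 := by simpa using hz0
  have harg : z.arg = Real.arctan (z.im / z.re) := arg_of_re_pos' hzre_pos
  have harg_ne : z.arg ≠ Real.pi := by
    rw [harg]
    have h1 := Real.arctan_lt_pi_div_two (z.im / z.re)
    have := Real.pi_pos
    intro h; rw [h] at h1; linarith
  have hconj : (1 : ℂ) - Complex.exp (-θ * Complex.I) / p = (starRingEnd ℂ) z := by
    rw [hzdef, map_sub, map_one, map_div₀, ← Complex.exp_conj]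
    congr 2
    · rw [map_mul, Complex.conj_I, Complex.conj_ofReal]; push_cast; ring
    · simp
  rw [gfun, ← hzdef, hconj,
    Complex.cpow_def_of_ne_zero hz0, Complex.cpow_def_of_ne_zero hc0, ← Complex.exp_add,
    Complex.log_conj z harg_ne]
  set L := Complex.log z with hL
  have hconjL : (starRingEnd ℂ) L = L - ((2 * L.im : ℝ) : ℂ) * I := by
    rw [← Complex.sub_conj]; ring
  have hexp : L * -((s : ℂ) / (2 * I)) + (starRingEnd ℂ) L * ((s : ℂ) / (2 * I)) =
      ((-s * L.im : ℝ) : ℂ) := by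
    rw [hconjL]
    have hI : Complex.I ≠ 0 := Complex.I_ne_zero
    field_simp
    push_cast
    ring_nf
  rw [hexp, ← Complex.ofReal_exp]
  congr 1
  have him : z.im / z.re = -(Real.sin θ / ((p : ℝ) - Real.cos θ)) := by
    rw [hzre, hzim]
    have h1 : (p : ℝ) - Real.cos θ ≠ 0 := by linarith
    have h2 : 1 - Real.cos θ / p ≠ 0 := by
      have : 0 < 1 - Real.cos θ / p := by rw [sub_pos, div_lt_one hp0]; linarith
      linarith
    field_simp
  rw [Complex.log_im, harg, him, Real.arctan_neg]
  ring

lemma key_ineq (P u a b : ℝ) (hP : 2 ≤ P) (hu0 : 0 < u) (hu2 : u ^ 2 = P ^ 2 - 1)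
    (hab : a ^ 2 + b ^ 2 = 1) : a / (P - b) ≤ 1 / u := by
  have hb1 : b ≤ 1 := by nlinarith [sq_nonneg a]
  have hden : 0 < P - b := by linarith
  rw [div_le_div_iff₀ hden hu0]
  nlinarith [sq_nonneg (u * b - a), sq_nonneg (u * b + a), sq_nonneg (a * u + b - P),
    sq_nonneg (a * u + b + P)]

/-- **Lemma 3.5.** For `s > 0`, `g_s` is a real-valued positive continuous function on
`[-π, π]`, with minimum `g_s(-θ_p) = exp(-s arctan(1/√(p²-1)))` and maximum
`g_s(θ_p) = exp(s arctan(1/√(p²-1)))`, where `θ_p = arccos(1/p)`. -/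
theorem gfun_min_max :
    ∀ p : ℕ, p.Prime → ∀ s : ℝ, 0 < s →
      (∀ θ ∈ Set.Icc (-Real.pi) Real.pi, (gfun p s θ).im = 0 ∧ 0 < (gfun p s θ).re) ∧
      ContinuousOn (fun θ : ℝ => gfun p s θ) (Set.Icc (-Real.pi) Real.pi) ∧
      (gfun p s (-Real.arccos (1 / p))).re =
        Real.exp (-(s * Real.arctan (1 / Real.sqrt ((p : ℝ) ^ 2 - 1)))) ∧
      (gfun p s (Real.arccos (1 / p))).re =
        Real.exp (s * Real.arctan (1 / Real.sqrt ((p : ℝ) ^ 2 - 1))) ∧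
      ∀ θ ∈ Set.Icc (-Real.pi) Real.pi,
        (gfun p s (-Real.arccos (1 / p))).re ≤ (gfun p s θ).re ∧
          (gfun p s θ).re ≤ (gfun p s (Real.arccos (1 / p))).re := by
  intro p hp s hs
  have hP : (2 : ℝ) ≤ (p : ℝ) := by exact_mod_cast hp.two_le
  have hP0 : (0 : ℝ) < p := by linarith
  set u : ℝ := Real.sqrt ((p : ℝ) ^ 2 - 1) with hu
  have hu2 : u ^ 2 = (p : ℝ) ^ 2 - 1 := Real.sq_sqrt (by nlinarith)
  have hu0 : 0 < u := Real.sqrt_pos.mpr (by nlinarith)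
  clear_value u
  have hval := gfun_eq p hP s
  -- values at ± arccos (1/p)
  have hx1 : (1 : ℝ) / p ≤ 1 := by rw [div_le_one hP0]; linarith
  have hxm1 : (-1 : ℝ) ≤ 1 / p := by
    have : (0 : ℝ) ≤ 1 / p := by positivity
    linarith
  have hcosA : Real.cos (Real.arccos (1 / p)) = 1 / p := Real.cos_arccos hxm1 hx1
  have hsinA : Real.sin (Real.arccos (1 / p)) = u / p := by
    rw [Real.sin_arccos]
    have h1 : 1 - (1 / (p : ℝ)) ^ 2 = (u / p) ^ 2 := by
      field_simp
      linear_combination -hu2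
    rw [h1, Real.sqrt_sq (by positivity)]
  have hratio : Real.sin (Real.arccos (1 / p)) / ((p : ℝ) - Real.cos (Real.arccos (1 / p)))
      = 1 / u := by
    rw [hsinA, hcosA]
    have h1 : (p : ℝ) - 1 / p ≠ 0 := by
      have : (1 : ℝ) / p ≤ 1 := hx1
      intro h; nlinarith
    have hq : (p : ℝ) * p - 1 ≠ 0 := by nlinarith
    field_simp [hq]
    rw [hu2, div_self (by rw [← hu2]; positivity)]
  have hratio' :
      Real.sin (-Real.arccos (1 / p)) / ((p : ℝ) - Real.cos (-Real.arccos (1 / p)))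
      = -(1 / u) := by
    rw [Real.sin_neg, Real.cos_neg, neg_div, hratio]
  -- bound on the ratio
  have hbound : ∀ θ : ℝ, -(1 / u) ≤ Real.sin θ / ((p : ℝ) - Real.cos θ) ∧
      Real.sin θ / ((p : ℝ) - Real.cos θ) ≤ 1 / u := by
    intro θ
    have h1 := key_ineq (p : ℝ) u (Real.sin θ) (Real.cos θ) hP hu0 hu2
      (Real.sin_sq_add_cos_sq θ)
    have h2 := key_ineq (p : ℝ) u (-Real.sin θ) (Real.cos θ) hP hu0 hu2
      (by rw [neg_pow]; simp [Real.sin_sq_add_cos_sq θ])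
    rw [neg_div] at h2
    constructor
    · linarith
    · exact h1
  refine ⟨?_, ?_, ?_, ?_, ?_⟩
  · intro θ _
    rw [hval θ]
    exact ⟨Complex.ofReal_im _, by rw [Complex.ofReal_re]; exact Real.exp_pos _⟩
  · have heq : (fun θ : ℝ => gfun p s θ) = fun θ : ℝ =>
        ((Real.exp (s * Real.arctan (Real.sin θ / ((p : ℝ) - Real.cos θ))) : ℝ) : ℂ) :=
      funext hval
    rw [heq]
    have hden : ∀ θ : ℝ, (p : ℝ) - Real.cos θ ≠ 0 := fun θ => by
      have := Real.cos_le_one θ; intro h; linarith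
    exact (Complex.continuous_ofReal.comp (Real.continuous_exp.comp
      (continuous_const.mul (Real.continuous_arctan.comp
        (Real.continuous_sin.div (continuous_const.sub Real.continuous_cos)
          hden))))).continuousOn
  · rw [hval _, Complex.ofReal_re, hratio', Real.arctan_neg]; ring_nf
  · rw [hval _, Complex.ofReal_re, hratio]
  · intro θ _
    rw [hval θ, hval (-Real.arccos (1 / p)), hval (Real.arccos (1 / p)),
      Complex.ofReal_re, Complex.ofReal_re, Complex.ofReal_re, hratio, hratio']
    have h := hbound θ
    constructor
    · exact Real.exp_le_exp.mpr (by
        have := Real.arctan_strictMono.monotone h.1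
        nlinarith [this])
    · exact Real.exp_le_exp.mpr (by
        have := Real.arctan_strictMono.monotone h.2
        nlinarith [this])
end

section
/- For every prime p and every real θ, | ∑_{n=1}^∞ sin(nθ)/(p^n n) | ≤ arctan( 1/√(p²−1) ). -/
open Complex MeasureTheory Filter Set

/-- The key inequality in Lemma 3.5 and Corollary 2.6: for every prime `p` and `θ ∈ ℝ`,
`|∑_{n ≥ 1} sin(nθ)/(p^n n)| ≤ arctan(1/√(p²-1))`. -/
theorem sin_series_bound :
    ∀ p : ℕ, p.Prime → ∀ θ : ℝ,
      |∑' n : ℕ, Real.sin ((n + 1) * θ) / ((p : ℝ) ^ (n + 1) * (n + 1))| ≤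
        Real.arctan (1 / Real.sqrt ((p : ℝ) ^ 2 - 1)) := by
  intro p hp θ
  have hp2 : (2:ℝ) ≤ p := by exact_mod_cast hp.two_le
  have hp0 : (0:ℝ) < p := by linarith
  set z : ℂ := Complex.exp (θ * Complex.I) / p with hzdef
  have hznorm : ‖z‖ < 1 := by
    rw [hzdef, norm_div,
      Complex.norm_exp_ofReal_mul_I, Complex.norm_natCast]
    rw [div_lt_one hp0]; linarith
  have h := Complex.hasSum_taylorSeries_neg_log hznorm
  have h2 : HasSum (fun n : ℕ => z ^ (n+1) / ((n:ℂ)+1))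
      (-Complex.log (1 - z)) := by
    have := (hasSum_nat_add_iff' (f := fun n : ℕ => z ^ n / n) 1).mpr h
    simpa using this
  have hterm : ∀ n : ℕ, (z ^ (n+1) / ((n:ℂ)+1)).im
      = Real.sin ((n+1) * θ) / ((p:ℝ)^(n+1) * (n+1)) := by
    intro n
    rw [hzdef, div_pow, ← Complex.exp_nat_mul, div_div]
    rw [show ((p:ℂ)^(n+1) * ((n:ℂ)+1)) = (((p:ℝ)^(n+1) * ((n:ℝ)+1) : ℝ) : ℂ) by
      push_cast; ring]
    rw [show (((n+1:ℕ):ℂ)) * (θ * Complex.I) = ((((n:ℝ)+1)*θ : ℝ):ℂ) * Complex.I by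
      push_cast; ring]
    rw [Complex.div_ofReal_im, Complex.exp_ofReal_mul_I_im]
  have h3 : HasSum (fun n : ℕ => Real.sin ((n+1) * θ) / ((p:ℝ)^(n+1) * (n+1)))
      (-Complex.log (1 - z)).im := by
    have := Complex.hasSum_im h2
    simpa only [hterm] using this
  rw [h3.tsum_eq, Complex.neg_im, Complex.log_im, abs_neg]
  -- rewrite the target as `arcsin (1/p)`
  have htarget : Real.arctan (1 / Real.sqrt ((p : ℝ) ^ 2 - 1)) = Real.arcsin (1 / p) := by
    have hq2 : (0:ℝ) < (p:ℝ)^2 - 1 := by nlinarith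
    rw [Real.arctan_eq_arcsin]
    congr 1
    rw [div_pow, one_pow, Real.sq_sqrt hq2.le]
    rw [show 1 + 1 / ((p:ℝ)^2 - 1) = (p:ℝ)^2 / ((p:ℝ)^2-1) by field_simp; ring]
    rw [Real.sqrt_div (by positivity) ((p:ℝ)^2-1), Real.sqrt_sq hp0.le]
    rw [div_div_div_eq]
    field_simp
  rw [htarget]
  -- now bound `|arg (1 - z)|`
  set s := Real.sin θ with hs
  set c := Real.cos θ with hc
  have hsc : s^2 + c^2 = 1 := Real.sin_sq_add_cos_sq θ
  have hc1 : -1 ≤ c ∧ c ≤ 1 := abs_le.mp (Real.abs_cos_le_one θ)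
  have him : (1 - z).im = -s / p := by
    rw [hzdef]
    simp [Complex.div_im, Complex.exp_ofReal_mul_I_im, Complex.exp_ofReal_mul_I_re,
      Complex.normSq_natCast, ← hs]
    field_simp
  have hre : (1 - z).re = 1 - c / p := by
    rw [hzdef]
    simp [Complex.div_re, Complex.exp_ofReal_mul_I_im, Complex.exp_ofReal_mul_I_re,
      Complex.normSq_natCast, ← hc]
    field_simp
  have hrepos : 0 < (1 - z).re := by
    rw [hre, sub_pos, div_lt_iff₀ hp0]
    nlinarith [hc1.1, hc1.2]
  set A := ‖1 - z‖ with hA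
  have hApos : 0 < A := by
    calc (0:ℝ) < (1 - z).re := hrepos
    _ ≤ A := Complex.re_le_norm _
  have habs : |s| ≤ A := by
    have hsq : s^2 ≤ A^2 := by
      rw [hA, Complex.sq_norm, Complex.normSq_apply, him, hre]
      have hpne : (p:ℝ) ≠ 0 := hp0.ne'
      field_simp
      nlinarith [sq_nonneg (c * p - 1)]
    have := Real.sqrt_le_sqrt hsq
    rwa [Real.sqrt_sq_eq_abs, Real.sqrt_sq hApos.le] at this
  have harg : Complex.arg (1 - z) = Real.arcsin ((-s / p) / A) := by
    rw [Complex.arg_of_re_nonneg hrepos.le, him, hA]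
  have htle : |(-s / p) / A| ≤ 1 / p := by
    rw [abs_div, abs_div, abs_neg, abs_of_pos hApos, abs_of_pos hp0, div_div,
      div_le_div_iff₀ (by positivity) hp0]
    nlinarith [habs, abs_nonneg s]
  rw [harg]
  rcases abs_le.mp htle with ⟨htl, htu⟩
  rw [abs_le]
  constructor
  · rw [← Real.arcsin_neg]
    exact Real.monotone_arcsin (by linarith)
  · exact Real.monotone_arcsin htu
end
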